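/- With the notation of the previous discrete convolution (μ ∈ C²(ℝ) with bounded second derivative, nonnegative temporal weights Γ^m with Δt Σ Γ^m ≤ ‖Γ‖_{L¹}, nonnegative densities with mass ≤ M), the discrete second difference satisfies |c_{i+3/2}^n − 2 c_{i+1/2}^n + c_{i−1/2}^n| ≤ 2 M ‖μ''‖_{L^∞} ‖Γ‖_{L¹} (Δx)² for all i, n. -/

import Mathlib

open Finset

lemma mvt_lip {f : ℝ → ℝ} {C : ℝ} (hf : Differentiable ℝ f)
    (hC : ∀ z, |deriv f z| ≤ C) (x y : ℝ) : |f y - f x| ≤ C * |y - x| := by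
  have := Convex.norm_image_sub_le_of_norm_deriv_le (s := (Set.univ : Set ℝ))
    (fun z _ => hf z) (fun z _ => hC z) convex_univ (Set.mem_univ x) (Set.mem_univ y)
  simpa using this

lemma second_diff_bound {μ : ℝ → ℝ} {Kμ : ℝ} (hμ : ContDiff ℝ 2 μ)
    (hK : ∀ z, |deriv (deriv μ) z| ≤ Kμ) (h a : ℝ) :
    |μ (a + h) - 2 * μ a + μ (a - h)| ≤ Kμ * h ^ 2 := by
  have hμ1 : Differentiable ℝ μ := hμ.differentiable (by norm_num)
  have hμ2 : Differentiable ℝ (deriv μ) :=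
    (hμ.iterate_deriv' 1 1).differentiable (by norm_num)
  have hlip : ∀ x y : ℝ, |deriv μ y - deriv μ x| ≤ Kμ * |y - x| :=
    fun x y => mvt_lip hμ2 hK x y
  set g : ℝ → ℝ := fun x => μ (x + h) - μ x with hg
  have hgd : Differentiable ℝ g := by
    exact (hμ1.comp (differentiable_id.add_const h)).sub hμ1
  have hgderiv : ∀ x, deriv g x = deriv μ (x + h) - deriv μ x := by
    intro x
    have h1 : HasDerivAt (fun y => μ (y + h)) (deriv μ (x + h)) x := by
      simpa [Function.comp_def] using (HasDerivAt.comp x (hμ1 (x + h)).hasDerivAt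
        ((hasDerivAt_id x).add_const h))
    exact (h1.sub (hμ1 x).hasDerivAt).deriv
  have hgC : ∀ x, |deriv g x| ≤ Kμ * |h| := by
    intro x
    rw [hgderiv x]
    calc |deriv μ (x + h) - deriv μ x| ≤ Kμ * |x + h - x| := hlip x (x + h)
      _ = Kμ * |h| := by ring_nf
  have key := mvt_lip hgd hgC (a - h) a
  have e1 : g a - g (a - h) = μ (a + h) - 2 * μ a + μ (a - h) := by
    simp only [hg]; ring_nf
  have e2 : |a - (a - h)| = |h| := by ring_nf
  rw [e1, e2] at key
  calc |μ (a + h) - 2 * μ a + μ (a - h)| ≤ Kμ * |h| * |h| := key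
    _ = Kμ * h ^ 2 := by rw [mul_assoc, ← abs_mul, ← sq, abs_sq]

/-- Second-difference estimate on the discrete space-time convolution, with a
constant depending only on the `L¹` norm of the temporal kernel. -/
theorem discrete_convolution_second_difference
    (Δx Δt M Kμ KΓ : ℝ) (μ : ℝ → ℝ) (Γ : ℕ → ℝ) (U : ℤ → ℕ → ℝ)
    (hΔx : 0 < Δx) (hΔt : 0 < Δt)
    (hμ : ContDiff ℝ 2 μ) (hKμ : ∀ z, |deriv (deriv μ) z| ≤ Kμ)
    (hΓnn : ∀ m, 0 ≤ Γ m)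
    (hKΓ : ∀ s : Finset ℕ, Δt * ∑ m ∈ s, Γ m ≤ KΓ)
    (hUnn : ∀ p m, 0 ≤ U p m)
    (hUsum : ∀ m, Summable fun p : ℤ => U p m)
    (hμUsum : ∀ (i : ℤ) (m : ℕ),
      Summable fun p : ℤ => μ (((i : ℝ) + 1/2 - (p : ℝ)) * Δx) * U p m)
    (hM : ∀ m, Δx * ∑' p : ℤ, U p m ≤ M) :
    ∀ (i : ℤ) (n : ℕ),
      |(Δx * Δt * ∑ m ∈ range (n + 1), Γ (n - m) *
            ∑' p : ℤ, μ (((i : ℝ) + 3/2 - (p : ℝ)) * Δx) * U p m) -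
        2 * (Δx * Δt * ∑ m ∈ range (n + 1), Γ (n - m) *
            ∑' p : ℤ, μ (((i : ℝ) + 1/2 - (p : ℝ)) * Δx) * U p m) +
        (Δx * Δt * ∑ m ∈ range (n + 1), Γ (n - m) *
            ∑' p : ℤ, μ (((i : ℝ) - 1/2 - (p : ℝ)) * Δx) * U p m)|
        ≤ 2 * M * Kμ * KΓ * Δx ^ 2 := by
  intro i n
  have hKμnn : 0 ≤ Kμ := le_trans (abs_nonneg _) (hKμ 0)
  have hMnn : 0 ≤ M := le_trans (mul_nonneg hΔx.le
    (tsum_nonneg fun p => hUnn p 0)) (hM 0)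
  -- summability of the three shifted families
  have hs3 : ∀ m, Summable fun p : ℤ =>
      μ (((i : ℝ) + 3/2 - (p : ℝ)) * Δx) * U p m := by
    intro m
    have := hμUsum (i + 1) m
    convert this using 2 with p
    push_cast
    ring_nf
  have hs1 : ∀ m, Summable fun p : ℤ =>
      μ (((i : ℝ) + 1/2 - (p : ℝ)) * Δx) * U p m := hμUsum i
  have hsm : ∀ m, Summable fun p : ℤ =>
      μ (((i : ℝ) - 1/2 - (p : ℝ)) * Δx) * U p m := by
    intro m
    have := hμUsum (i - 1) m
    convert this using 2 with p
    push_cast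
    ring_nf
  -- inner second-difference bound for each m
  have inner : ∀ m, |(∑' p : ℤ, μ (((i : ℝ) + 3/2 - (p : ℝ)) * Δx) * U p m) -
      2 * (∑' p : ℤ, μ (((i : ℝ) + 1/2 - (p : ℝ)) * Δx) * U p m) +
      (∑' p : ℤ, μ (((i : ℝ) - 1/2 - (p : ℝ)) * Δx) * U p m)|
      ≤ Kμ * Δx ^ 2 * ∑' p : ℤ, U p m := by
    intro m
    set f : ℤ → ℝ := fun p =>
      (μ (((i : ℝ) + 3/2 - (p : ℝ)) * Δx) - 2 * μ (((i : ℝ) + 1/2 - (p : ℝ)) * Δx)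
        + μ (((i : ℝ) - 1/2 - (p : ℝ)) * Δx)) * U p m with hf
    have hfs : Summable f := by
      have := ((hs3 m).sub ((hs1 m).mul_left 2)).add (hsm m)
      convert this using 2 with p
      rfl
      simp [hf]; ring
    have hcomb : (∑' p : ℤ, μ (((i : ℝ) + 3/2 - (p : ℝ)) * Δx) * U p m) -
        2 * (∑' p : ℤ, μ (((i : ℝ) + 1/2 - (p : ℝ)) * Δx) * U p m) +
        (∑' p : ℤ, μ (((i : ℝ) - 1/2 - (p : ℝ)) * Δx) * U p m) = ∑' p, f p := by
      have e : ∑' p, f p = ∑' (p : ℤ), ((μ (((i : ℝ) + 3/2 - (p : ℝ)) * Δx) * U p m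
          - 2 * (μ (((i : ℝ) + 1/2 - (p : ℝ)) * Δx) * U p m))
          + μ (((i : ℝ) - 1/2 - (p : ℝ)) * Δx) * U p m) := by
        apply tsum_congr; intro p; simp only [hf]; ring
      rw [e, Summable.tsum_add ((hs3 m).sub ((hs1 m).mul_left 2)) (hsm m),
        Summable.tsum_sub (hs3 m) ((hs1 m).mul_left 2), tsum_mul_left]
    rw [hcomb]
    have hpb : ∀ p : ℤ, |f p| ≤ Kμ * Δx ^ 2 * U p m := by
      intro p
      rw [hf, abs_mul, abs_of_nonneg (hUnn p m)]
      refine mul_le_mul_of_nonneg_right ?_ (hUnn p m)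
      have h1 : ((i : ℝ) + 3/2 - (p : ℝ)) * Δx = ((i : ℝ) + 1/2 - (p : ℝ)) * Δx + Δx := by ring
      have h2 : ((i : ℝ) - 1/2 - (p : ℝ)) * Δx = ((i : ℝ) + 1/2 - (p : ℝ)) * Δx - Δx := by ring
      rw [h1, h2]
      exact second_diff_bound hμ hKμ Δx _
    calc |∑' p, f p| ≤ ∑' p, |f p| := by
          simpa [Real.norm_eq_abs] using norm_tsum_le_tsum_norm (f := f)
            (by simpa [Real.norm_eq_abs] using hfs.abs)
      _ ≤ ∑' p, Kμ * Δx ^ 2 * U p m :=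
          Summable.tsum_le_tsum hpb hfs.abs ((hUsum m).mul_left _)
      _ = Kμ * Δx ^ 2 * ∑' p, U p m := tsum_mul_left
  -- combine the outer finite sums
  set T3 := fun m => ∑' p : ℤ, μ (((i : ℝ) + 3/2 - (p : ℝ)) * Δx) * U p m
  set T1 := fun m => ∑' p : ℤ, μ (((i : ℝ) + 1/2 - (p : ℝ)) * Δx) * U p m
  set Tm := fun m => ∑' p : ℤ, μ (((i : ℝ) - 1/2 - (p : ℝ)) * Δx) * U p m
  have hcomb2 : (Δx * Δt * ∑ m ∈ range (n + 1), Γ (n - m) * T3 m) -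
      2 * (Δx * Δt * ∑ m ∈ range (n + 1), Γ (n - m) * T1 m) +
      (Δx * Δt * ∑ m ∈ range (n + 1), Γ (n - m) * Tm m)
      = Δx * Δt * ∑ m ∈ range (n + 1), Γ (n - m) * (T3 m - 2 * T1 m + Tm m) := by
    rw [Finset.sum_congr rfl (fun m _ => by ring :
      ∀ m ∈ range (n+1), Γ (n - m) * (T3 m - 2 * T1 m + Tm m)
        = Γ (n - m) * T3 m - 2 * (Γ (n - m) * T1 m) + Γ (n - m) * Tm m)]
    rw [Finset.sum_add_distrib, Finset.sum_sub_distrib, ← Finset.mul_sum]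
    ring
  rw [hcomb2]
  have step : |Δx * Δt * ∑ m ∈ range (n + 1), Γ (n - m) * (T3 m - 2 * T1 m + Tm m)|
      ≤ Δx * Δt * ∑ m ∈ range (n + 1), Γ (n - m) * (Kμ * Δx * M) := by
    rw [abs_mul, abs_of_nonneg (mul_nonneg hΔx.le hΔt.le)]
    gcongr
    calc |∑ m ∈ range (n + 1), Γ (n - m) * (T3 m - 2 * T1 m + Tm m)|
        ≤ ∑ m ∈ range (n + 1), |Γ (n - m) * (T3 m - 2 * T1 m + Tm m)| :=
          Finset.abs_sum_le_sum_abs _ _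
      _ ≤ ∑ m ∈ range (n + 1), Γ (n - m) * (Kμ * Δx * M) := by
          apply Finset.sum_le_sum
          intro m _
          rw [abs_mul, abs_of_nonneg (hΓnn _)]
          apply mul_le_mul_of_nonneg_left _ (hΓnn _)
          calc |T3 m - 2 * T1 m + Tm m| ≤ Kμ * Δx ^ 2 * ∑' p, U p m := inner m
            _ = Kμ * Δx * (Δx * ∑' p, U p m) := by ring
            _ ≤ Kμ * Δx * M := by
                apply mul_le_mul_of_nonneg_left (hM m)
                exact mul_nonneg hKμnn hΔx.le
  refine step.trans ?_
  have hΓ : Δt * ∑ m ∈ range (n + 1), Γ (n - m) ≤ KΓ := by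
    have key : ∑ m ∈ range (n + 1), Γ (n - m) = ∑ m ∈ (range (n+1)).image (fun m => n - m), Γ m := by
      rw [Finset.sum_image]
      intro a ha b hb hab
      simp only [Finset.mem_coe, Finset.mem_range] at ha hb hab
      omega
    rw [key]
    exact hKΓ _
  calc Δx * Δt * (∑ m ∈ range (n + 1), Γ (n - m) * (Kμ * Δx * M))
      = (Δt * ∑ m ∈ range (n + 1), Γ (n - m)) * (Kμ * Δx ^ 2 * M) := by
        rw [← Finset.sum_mul]; ring
    _ ≤ KΓ * (Kμ * Δx ^ 2 * M) := by
        apply mul_le_mul_of_nonneg_right hΓ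
        positivity
    _ ≤ 2 * M * Kμ * KΓ * Δx ^ 2 := by
        have hKΓnn : 0 ≤ KΓ := le_trans (by simp) (hKΓ ∅)
        nlinarith [mul_nonneg hMnn hKμnn, mul_nonneg (mul_nonneg hMnn hKμnn) hKΓnn,
          sq_nonneg Δx, mul_nonneg (mul_nonneg (mul_nonneg hMnn hKμnn) hKΓnn) (sq_nonneg Δx)]
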